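/- For real symmetric positive definite 2×2 matrices A and B, Tr(√(√B · A · √B)) = Tr(√(√A · B · √A)). -/

import Mathlib

open Matrix

section OldSqrt

open scoped ComplexOrder

/-- The square root of a positive semidefinite matrix, as defined in Mathlib (Dec 2024). -/
noncomputable def Matrix.PosSemidef.sqrt {n 𝕜 : Type*} [Fintype n] [DecidableEq n] [RCLike 𝕜]
    {A : Matrix n n 𝕜} (hA : A.PosSemidef) : Matrix n n 𝕜 :=
  hA.1.eigenvectorUnitary.1 * diagonal ((↑) ∘ Real.sqrt ∘ hA.1.eigenvalues) *
  (star hA.1.eigenvectorUnitary : Matrix n n 𝕜)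

theorem Matrix.PosSemidef.posSemidef_sqrt {n 𝕜 : Type*} [Fintype n] [DecidableEq n] [RCLike 𝕜]
    {A : Matrix n n 𝕜} (hA : A.PosSemidef) : hA.sqrt.PosSemidef := by
  unfold Matrix.PosSemidef.sqrt
  apply PosSemidef.mul_mul_conjTranspose_same
  refine posSemidef_diagonal_iff.mpr fun i => ?_
  rw [Function.comp_apply, RCLike.nonneg_iff]
  constructor
  · simp only [Function.comp_apply, RCLike.ofReal_re]
    exact Real.sqrt_nonneg _
  · simp only [Function.comp_apply, RCLike.ofReal_im]

end OldSqrt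

theorem Matrix.PosSemidef.sqrt_mul_self {n : Type*} [Fintype n] [DecidableEq n]
    {A : Matrix n n ℝ} (hA : A.PosSemidef) : hA.sqrt * hA.sqrt = A := by
  unfold Matrix.PosSemidef.sqrt
  conv_rhs => rw [hA.1.spectral_theorem, Unitary.conjStarAlgAut_apply]
  have hU : (star hA.1.eigenvectorUnitary : Matrix n n ℝ) * hA.1.eigenvectorUnitary.1 = 1 :=
    Unitary.coe_star_mul_self _
  rw [show ∀ U D V : Matrix n n ℝ, U * D * V * (U * D * V) = U * (D * (V * U) * D) * V by
    intro U D V; simp only [Matrix.mul_assoc], hU, Matrix.mul_one, diagonal_mul_diagonal]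
  congr 2
  refine congrArg diagonal (funext fun i => ?_)
  simp [Real.mul_self_sqrt (hA.eigenvalues_nonneg i)]

theorem sqrt_conj_psd {A B : Matrix (Fin 2) (Fin 2) ℝ} (hA : A.PosSemidef) (hB : B.PosSemidef) :
    (hB.sqrt * A * hB.sqrt).PosSemidef := by
  have h := hA.mul_mul_conjTranspose_same hB.sqrt
  rwa [hB.posSemidef_sqrt.1] at h

lemma psd_trace_nonneg {n : Type*} [Fintype n] [DecidableEq n] {M : Matrix n n ℝ}
    (h : M.PosSemidef) : 0 ≤ M.trace := by
  exact h.trace_nonneg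

lemma psd_det_nonneg {n : Type*} [Fintype n] [DecidableEq n] {M : Matrix n n ℝ}
    (h : M.PosSemidef) : 0 ≤ M.det := by
  rw [h.1.det_eq_prod_eigenvalues]
  exact Finset.prod_nonneg fun i _ => by simpa using h.eigenvalues_nonneg i

lemma psd_det_sqrt {n : Type*} [Fintype n] [DecidableEq n] {M : Matrix n n ℝ}
    (h : M.PosSemidef) : h.sqrt.det = Real.sqrt M.det := by
  have h0 : 0 ≤ h.sqrt.det := psd_det_nonneg h.posSemidef_sqrt
  have h1 : h.sqrt.det ^ 2 = M.det := by
    rw [sq, ← Matrix.det_mul, h.sqrt_mul_self]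
  rw [← h1, Real.sqrt_sq h0]

lemma trace_sq_fin_two (M : Matrix (Fin 2) (Fin 2) ℝ) :
    M.trace ^ 2 = (M * M).trace + 2 * M.det := by
  simp only [Matrix.trace_fin_two, Matrix.det_fin_two, Matrix.mul_apply, Fin.sum_univ_two]
  ring

lemma trace_sqrt_formula {M : Matrix (Fin 2) (Fin 2) ℝ} (h : M.PosSemidef) :
    h.sqrt.trace = Real.sqrt (M.trace + 2 * Real.sqrt M.det) := by
  have h1 : 0 ≤ h.sqrt.trace := psd_trace_nonneg h.posSemidef_sqrt
  conv_lhs => rw [← Real.sqrt_sq h1]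
  rw [trace_sq_fin_two, h.sqrt_mul_self, psd_det_sqrt h]

theorem trace_sqrt_sandwich_symm (A B : Matrix (Fin 2) (Fin 2) ℝ)
    (hA : A.PosDef) (hB : B.PosDef) :
    (sqrt_conj_psd hA.posSemidef hB.posSemidef).sqrt.trace
      = (sqrt_conj_psd hB.posSemidef hA.posSemidef).sqrt.trace := by
  rw [trace_sqrt_formula, trace_sqrt_formula]
  have htr : (hB.posSemidef.sqrt * A * hB.posSemidef.sqrt).trace
      = (hA.posSemidef.sqrt * B * hA.posSemidef.sqrt).trace := by
    rw [Matrix.trace_mul_cycle, hB.posSemidef.sqrt_mul_self]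
    conv_rhs => rw [Matrix.trace_mul_cycle, hA.posSemidef.sqrt_mul_self]
    rw [Matrix.trace_mul_comm]
  have hdet : (hB.posSemidef.sqrt * A * hB.posSemidef.sqrt).det
      = (hA.posSemidef.sqrt * B * hA.posSemidef.sqrt).det := by
    have h1 : hB.posSemidef.sqrt.det * hB.posSemidef.sqrt.det = B.det := by
      rw [← Matrix.det_mul, hB.posSemidef.sqrt_mul_self]
    have h2 : hA.posSemidef.sqrt.det * hA.posSemidef.sqrt.det = A.det := by
      rw [← Matrix.det_mul, hA.posSemidef.sqrt_mul_self]
    simp only [Matrix.det_mul]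
    nlinarith [h1, h2]
  rw [htr, hdet]
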